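/- Let F = x + F₂ + F₃ + F₄ and G = z + G₂ + ⋯ + G₆ with Fᵢ, Gᵢ ∈ ℂ[x,y,z] homogeneous of degree i. Suppose F₄ = H², G₆ = αH³, F₃ = H·F̃₁, G₅ = (3/2)αH²F̃₁ and G₄ = (3/8)αH·F̃₁² + (3/2)αH·F₂ + bH², where H is a squarefree homogeneous polynomial of degree 2, F̃₁ is homogeneous of degree 1, α ∈ ℂ with α ≠ 0, and b ∈ ℂ. If deg[F,G] < 7, then G₃ = −(1/16)α·F̃₁³ + b·H·F̃₁ + (3/2)α·H·x + (3/4)α·F̃₁·F₂. -/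

import Mathlib

open MvPolynomial

noncomputable def jacMinor (f g : MvPolynomial (Fin 3) ℂ) (i j : Fin 3) :
    MvPolynomial (Fin 3) ℂ :=
  pderiv i f * pderiv j g - pderiv j f * pderiv i g

namespace Stmt6Aux

abbrev R3 := MvPolynomial (Fin 3) ℂ

lemma degree_sum_univ (d : Fin 3 →₀ ℕ) : d.degree = ∑ i : Fin 3, d i :=
  Finset.sum_subset (Finset.subset_univ _) (fun i _ hi => Finsupp.notMem_support_iff.mp hi)

lemma sum_id_eq_degree (d : Fin 3 →₀ ℕ) : (d.sum fun _ e => e) = d.degree := rfl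

lemma pderiv_as_sum (i : Fin 3) (f : R3) :
    pderiv i f
      = ∑ m ∈ f.support, monomial (m - Finsupp.single i 1) (coeff m f * (m i : ℂ)) := by
  conv_lhs => rw [f.as_sum]
  rw [map_sum]
  simp only [pderiv_monomial]

lemma degree_sub_single {d : Fin 3 →₀ ℕ} {i : Fin 3} (h : d i ≠ 0) :
    (d - Finsupp.single i 1).degree + 1 = d.degree := by
  have h1 : ∀ j : Fin 3, (d - Finsupp.single i 1 : Fin 3 →₀ ℕ) j = d j - (Finsupp.single i 1) j :=
    fun j => Finsupp.tsub_apply d (Finsupp.single i 1) j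
  rw [degree_sum_univ, degree_sum_univ,
    ← Finset.add_sum_erase _ _ (Finset.mem_univ i),
    ← Finset.add_sum_erase _ d (Finset.mem_univ i)]
  have h2 : ∑ j ∈ Finset.univ.erase i, (d - Finsupp.single i 1 : Fin 3 →₀ ℕ) j
      = ∑ j ∈ Finset.univ.erase i, d j := by
    refine Finset.sum_congr rfl fun j hj => ?_
    rw [h1, Finsupp.single_apply, if_neg (Finset.ne_of_mem_erase hj).symm, Nat.sub_zero]
  have h3 : (d - Finsupp.single i 1 : Fin 3 →₀ ℕ) i = d i - 1 := by
    rw [h1 i, Finsupp.single_apply, if_pos rfl]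
  rw [h2, h3]
  omega

lemma pderiv_isHomogeneous {f : R3} {n : ℕ} (hf : f.IsHomogeneous n) (i : Fin 3) :
    (pderiv i f).IsHomogeneous (n - 1) := by
  rw [pderiv_as_sum]
  apply IsHomogeneous.sum
  intro m hm
  by_cases h : m i = 0
  · rw [h]
    simp only [Nat.cast_zero, mul_zero, map_zero]
    exact isHomogeneous_zero _ _ _
  · apply isHomogeneous_monomial
    have hd : m.degree = n := by
      rw [Finsupp.degree_eq_weight_one]
      exact hf (mem_support_iff.mp hm)
    have h2 := degree_sub_single (d := m) (i := i) h
    omega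

lemma euler {f : R3} {n : ℕ} (hf : f.IsHomogeneous n) :
    ∑ i : Fin 3, X i * pderiv i f = C (n : ℂ) * f := by
  conv_rhs => rw [f.as_sum]
  rw [Finset.mul_sum]
  conv_lhs =>
    rw [Finset.sum_congr rfl fun (i : Fin 3) (_ : i ∈ Finset.univ) => by
      rw [pderiv_as_sum i f, Finset.mul_sum]]
  rw [Finset.sum_comm]
  refine Finset.sum_congr rfl fun m hm => ?_
  have hd : m.degree = n := by
    rw [Finsupp.degree_eq_weight_one]
    exact hf (mem_support_iff.mp hm)
  have hterm : ∀ i : Fin 3,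
      X i * monomial (m - Finsupp.single i 1) (coeff m f * (m i : ℂ))
        = monomial m (coeff m f * (m i : ℂ)) := by
    intro i
    by_cases h : m i = 0
    · rw [h]
      simp
    · have hmm : Finsupp.single i 1 + (m - Finsupp.single i 1) = m := by
        ext j
        rw [Finsupp.add_apply, Finsupp.tsub_apply]
        rcases eq_or_ne j i with rfl | hji
        · rw [Finsupp.single_apply, if_pos rfl]
          omega
        · rw [Finsupp.single_apply, if_neg hji.symm]
          omega
      rw [X, monomial_mul, hmm, one_mul]
  rw [Finset.sum_congr rfl fun i _ => hterm i, ← map_sum, C_mul_monomial]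
  congr 1
  rw [← Finset.mul_sum, ← Nat.cast_sum, ← degree_sum_univ, hd]
  ring


noncomputable def Phi : MvPolynomial (Fin 3) ℂ →ₐ[ℂ] Polynomial (MvPolynomial (Fin 3) ℂ) :=
  aeval (fun i => Polynomial.C (X i) * Polynomial.X)

lemma phi_eval_one (f : R3) : Polynomial.eval 1 (Phi f) = f := by
  induction f using MvPolynomial.induction_on with
  | C a => simp [Phi, algebraMap_eq]
  | add p q hp hq => simp [map_add, hp, hq]
  | mul_X p i hp =>
    rw [show Phi (p * X i) = Phi p * (Polynomial.C (X i) * Polynomial.X) by simp [Phi]]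
    simp [hp]

lemma phi_ne_zero {f : R3} (hf : f ≠ 0) : Phi f ≠ 0 := fun h0 =>
  hf (by rw [← phi_eval_one f, h0, Polynomial.eval_zero])

lemma phi_homog {f : R3} {n : ℕ} (hf : f.IsHomogeneous n) :
    Phi f = Polynomial.C f * Polynomial.X ^ n := by
  conv_lhs => rw [f.as_sum]
  conv_rhs => rw [f.as_sum]
  rw [map_sum, map_sum, Finset.sum_mul]
  refine Finset.sum_congr rfl fun m hm => ?_
  have hd : m.degree = n := by
    rw [Finsupp.degree_eq_weight_one]
    exact hf (mem_support_iff.mp hm)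
  rw [Phi, aeval_monomial]
  have h1 : (m.prod fun i k => (Polynomial.C (X i) * Polynomial.X) ^ k)
      = Polynomial.C (m.prod fun (i : Fin 3) (k : ℕ) => (X i : R3) ^ k)
          * Polynomial.X ^ m.degree := by
    rw [Finsupp.prod, Finsupp.prod]
    simp_rw [mul_pow, ← Polynomial.C_pow]
    rw [Finset.prod_mul_distrib, ← map_prod, Finset.prod_pow_eq_pow_sum]
    rfl
  rw [h1, hd]
  have h2 : algebraMap ℂ (Polynomial R3) (coeff m f) = Polynomial.C (C (coeff m f)) := rfl
  rw [h2, ← mul_assoc, ← map_mul, ← monomial_eq]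

lemma hc_top_ne_zero {f : R3} (hf : f ≠ 0) :
    homogeneousComponent f.totalDegree f ≠ 0 := by
  obtain ⟨m, hm, hdeg⟩ := Finset.exists_mem_eq_sup f.support
    (Finset.nonempty_iff_ne_empty.mpr (mt support_eq_empty.mp hf)) (fun m : Fin 3 →₀ ℕ => m.sum fun _ e => e)
  intro h0
  have hco := coeff_homogeneousComponent (n := f.totalDegree) m (φ := f)
  rw [h0] at hco
  rw [sum_id_eq_degree] at hdeg
  have : m.degree = f.totalDegree := hdeg.symm
  rw [if_pos this] at hco
  exact mem_support_iff.mp hm hco.symm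

lemma phi_natDegree {f : R3} (hf : f ≠ 0) : (Phi f).natDegree = f.totalDegree := by
  have hdecomp : Phi f = ∑ k ∈ Finset.range (f.totalDegree + 1),
      Polynomial.C (homogeneousComponent k f) * Polynomial.X ^ k := by
    conv_lhs => rw [← sum_homogeneousComponent (φ := f), map_sum]
    exact Finset.sum_congr rfl fun k _ => phi_homog (homogeneousComponent_isHomogeneous k f)
  have hcoeff : ∀ k, k ≤ f.totalDegree → (Phi f).coeff k = homogeneousComponent k f := by
    intro k hk
    rw [hdecomp, Polynomial.finset_sum_coeff]
    simp only [Polynomial.coeff_C_mul, Polynomial.coeff_X_pow]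
    rw [Finset.sum_eq_single k]
    · simp
    · intro j _ hj
      rw [if_neg (fun h => hj h.symm), mul_zero]
    · intro hk'
      exact (hk' (Finset.mem_range.mpr (by omega))).elim
  apply le_antisymm
  · rw [Polynomial.natDegree_le_iff_coeff_eq_zero]
    intro N hN
    rw [hdecomp, Polynomial.finset_sum_coeff]
    apply Finset.sum_eq_zero
    intro j hj
    rw [Polynomial.coeff_C_mul, Polynomial.coeff_X_pow,
      if_neg (by rw [Finset.mem_range] at hj; omega), mul_zero]
  · apply Polynomial.le_natDegree_of_ne_zero
    rw [hcoeff _ le_rfl]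
    exact hc_top_ne_zero hf

lemma totalDegree_le_of_dvd {f g : R3} (h : f ∣ g) (hg : g ≠ 0) :
    f.totalDegree ≤ g.totalDegree := by
  obtain ⟨c, rfl⟩ := h
  have hf : f ≠ 0 := left_ne_zero_of_mul hg
  have hc : c ≠ 0 := right_ne_zero_of_mul hg
  have hdeg := phi_natDegree hg
  rw [map_mul, Polynomial.natDegree_mul (phi_ne_zero hf) (phi_ne_zero hc)] at hdeg
  rw [← hdeg, ← phi_natDegree hf]
  exact Nat.le_add_right _ _

lemma totalDegree_pderiv_lt {f : R3} (hf : f.totalDegree ≠ 0) (i : Fin 3) :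
    (pderiv i f).totalDegree < f.totalDegree := by
  have h1 : (pderiv i f).totalDegree ≤ f.totalDegree - 1 := by
    rw [pderiv_as_sum]
    refine le_trans (totalDegree_finset_sum _ _) (Finset.sup_le fun m hm => ?_)
    by_cases h : m i = 0
    · rw [h]
      simp
    · refine le_trans (totalDegree_monomial_le _ _) ?_
      have h2 := degree_sub_single (d := m) (i := i) h
      have h3 : m.degree ≤ f.totalDegree := by
        rw [← sum_id_eq_degree]
        exact le_totalDegree hm
      have h4 : ((m - Finsupp.single i 1 : Fin 3 →₀ ℕ).sum fun _ => id)
          = (m - Finsupp.single i 1 : Fin 3 →₀ ℕ).degree := sum_id_eq_degree _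
      omega
  omega

lemma tD_zero_of_pderiv_eq_zero {f : R3} (h : ∀ i, pderiv i f = 0) :
    f.totalDegree = 0 := by
  by_contra h0
  have hne : f ≠ 0 := fun hf => h0 (by simp [hf])
  obtain ⟨m, hm, hdeg⟩ := Finset.exists_mem_eq_sup f.support
    (Finset.nonempty_iff_ne_empty.mpr (mt support_eq_empty.mp hne)) (fun m : Fin 3 →₀ ℕ => m.sum fun _ e => e)
  rw [sum_id_eq_degree] at hdeg
  have hmd : m.degree ≠ 0 := fun hh => h0 (by rw [totalDegree, hdeg]; exact hh)
  have hmne : m ≠ 0 := fun hh => hmd (by rw [hh]; exact map_zero _)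
  obtain ⟨i, hi⟩ := Finsupp.support_nonempty_iff.mpr hmne
  have hmi : m i ≠ 0 := Finsupp.mem_support_iff.mp hi
  have hco : coeff (m - Finsupp.single i 1) (pderiv i f) = coeff m f * (m i : ℂ) := by
    rw [pderiv_as_sum, coeff_sum]
    rw [Finset.sum_eq_single m]
    · rw [coeff_monomial, if_pos rfl]
    · intro m' hm' hne'
      rw [coeff_monomial]
      split_ifs with he
      · by_cases h' : m' i = 0
        · rw [h']
          simp
        · exfalso
          apply hne'
          ext j
          have hj := DFunLike.congr_fun he j
          rw [Finsupp.tsub_apply, Finsupp.tsub_apply] at hj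
          rcases eq_or_ne j i with rfl | hji
          · rw [Finsupp.single_apply, if_pos rfl] at hj
            omega
          · rw [Finsupp.single_apply, if_neg hji.symm] at hj
            omega
      · rfl
    · intro hmm
      exact (hmm hm).elim
  rw [h i] at hco
  simp only [coeff_zero] at hco
  rcases mul_eq_zero.mp hco.symm with hh | hh
  · exact mem_support_iff.mp hm hh
  · exact hmi (Nat.cast_eq_zero.mp hh)


lemma no_prime_pderiv {H p : R3} (hsf : Squarefree H) (hp : Prime p) (hpH : p ∣ H)
    (h : ∀ i, p ∣ pderiv i H) : False := by
  obtain ⟨q, rfl⟩ := hpH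
  have hpq : ¬ p ∣ q := fun hd => hp.not_isUnit (hsf p (mul_dvd_mul_left p hd))
  have hps : ∀ i, p ∣ pderiv i p := by
    intro i
    have he : pderiv i (p * q) = pderiv i p * q + p * pderiv i q := pderiv_mul
    have h2 : p ∣ pderiv i p * q := by
      have h3 : p ∣ pderiv i p * q + p * pderiv i q := he ▸ h i
      have h4 : p ∣ p * pderiv i q := dvd_mul_right _ _
      exact (dvd_add_right h4).mp (by rwa [add_comm] at h3)
    exact (hp.dvd_or_dvd h2).resolve_right hpq
  have htd : p.totalDegree ≠ 0 := by
    intro h0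
    have hcp : p = C (coeff 0 p) := by
      have hs := sum_homogeneousComponent (φ := p)
      rw [h0] at hs
      simpa using hs.symm
    have hc0 : coeff 0 p ≠ 0 := fun hh => hp.ne_zero (by rw [hcp, hh, map_zero])
    exact hp.not_isUnit (hcp ▸ IsUnit.of_mul_eq_one (C (coeff 0 p)⁻¹)
      (by rw [← map_mul, mul_inv_cancel₀ hc0, map_one]))
  have hz : ∀ i, pderiv i p = 0 := by
    intro i
    by_contra hne
    exact absurd (totalDegree_le_of_dvd (hps i) hne)
      (not_le.mpr (totalDegree_pderiv_lt htd i))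
  exact htd (tD_zero_of_pderiv_eq_zero hz)

lemma sqf_dvd : ∀ {H W : R3}, Squarefree H → (∀ p : R3, Prime p → p ∣ H → p ∣ W) → H ∣ W := by
  intro H W
  induction H using UniqueFactorizationMonoid.induction_on_prime with
  | h₁ => exact fun hsf _ => absurd hsf not_squarefree_zero
  | h₂ u hu => exact fun _ _ => hu.dvd
  | h₃ a p ha hp ih =>
    intro hsf hall
    have hsa : Squarefree a := hsf.of_mul_right
    have hadvd : a ∣ W := ih hsa (fun q hq hqa => hall q hq (Dvd.dvd.mul_left hqa p))
    have hpW : p ∣ W := hall p hp (dvd_mul_right p a)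
    have hpa : ¬ p ∣ a := fun hd => hp.not_unit (hsf p (mul_dvd_mul_left p hd))
    obtain ⟨E, rfl⟩ := hadvd
    obtain ⟨E', rfl⟩ := (hp.dvd_or_dvd hpW).resolve_left hpa
    exact ⟨E', by ring⟩

lemma dvd_of_rel {H W : R3} (hsf : Squarefree H) (h : ∀ i, H ∣ W * pderiv i H) :
    H ∣ W := by
  apply sqf_dvd hsf
  intro p hp hpH
  by_contra hpW
  have hpd : ∀ i, p ∣ pderiv i H := fun i =>
    (hp.dvd_or_dvd (dvd_trans hpH (h i))).resolve_left hpW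
  exact no_prime_pderiv hsf hp hpH hpd

lemma final {H D : R3} (hsf : Squarefree H) (hH : H.IsHomogeneous 2) (hD : D.IsHomogeneous 3)
    (hjac : ∀ i j : Fin 3, pderiv i H * pderiv j D = pderiv j H * pderiv i D) : D = 0 := by
  have hHne : H ≠ 0 := fun h => not_squarefree_zero (h ▸ hsf)
  have h32 : (C (3:ℂ) : R3) = C (2:ℂ) + 1 := by
    rw [← map_one (C (σ := Fin 3) (R := ℂ)), ← map_add]
    norm_num
  have hrel : ∀ i, C (2:ℂ) * H * pderiv i D = C (3:ℂ) * D * pderiv i H := by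
    intro i
    have e1 := euler hH
    have e2 := euler hD
    have c2 : ((2:ℕ) : ℂ) = (2:ℂ) := by norm_num
    have c3 : ((3:ℕ) : ℂ) = (3:ℂ) := by norm_num
    rw [c2] at e1
    rw [c3] at e2
    calc C (2:ℂ) * H * pderiv i D = (∑ j, X j * pderiv j H) * pderiv i D := by rw [e1]
      _ = ∑ j, X j * (pderiv j H * pderiv i D) := by
            rw [Finset.sum_mul]
            exact Finset.sum_congr rfl fun j _ => by ring
      _ = ∑ j, X j * (pderiv i H * pderiv j D) := by
            exact Finset.sum_congr rfl fun j _ => by rw [hjac]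
      _ = (∑ j, X j * pderiv j D) * pderiv i H := by
            rw [Finset.sum_mul]
            exact Finset.sum_congr rfl fun j _ => by ring
      _ = C (3:ℂ) * D * pderiv i H := by rw [e2]
  -- H ∣ D
  have hu3 : IsUnit (C (3:ℂ) : R3) := IsUnit.of_mul_eq_one (C ((3:ℂ)⁻¹))
    (by rw [← map_mul]; norm_num)
  have hHD : H ∣ D := by
    apply dvd_of_rel hsf
    intro i
    have h1 : H ∣ C (3:ℂ) * (D * pderiv i H) := ⟨C (2:ℂ) * pderiv i D, by
      linear_combination - hrel i⟩
    exact (IsUnit.dvd_mul_left hu3).mp h1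
  obtain ⟨L, rfl⟩ := hHD
  -- relation for L
  have hLrel : ∀ i, L * pderiv i H = H * (C (2:ℂ) * pderiv i L) := by
    intro i
    have h1 := hrel i
    rw [pderiv_mul, h32] at h1
    have h2 : H * (C (2:ℂ) * (pderiv i H * L + H * pderiv i L))
        = H * ((C (2:ℂ) + 1) * L * pderiv i H) := by linear_combination h1
    have h3 := mul_left_cancel₀ hHne h2
    linear_combination -h3
  have hHL : H ∣ L := dvd_of_rel hsf (fun i => ⟨C (2:ℂ) * pderiv i L, hLrel i⟩)
  obtain ⟨M, rfl⟩ := hHL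
  by_contra hne
  have h3 : (H * H : R3).totalDegree ≤ (H * (H * M)).totalDegree :=
    totalDegree_le_of_dvd ⟨M, by ring⟩ hne
  have h4 : (H * (H * M)).totalDegree = 3 := hD.totalDegree hne
  have h5 : (H * H : R3).totalDegree = 4 := (hH.mul hH).totalDegree (mul_ne_zero hHne hHne)
  omega

end Stmt6Aux

theorem stmt6 (F2 F3 F4 G2 G3 G4 G5 G6 H F1t : MvPolynomial (Fin 3) ℂ) (α b : ℂ)
    (hF2 : F2.IsHomogeneous 2) (hF3 : F3.IsHomogeneous 3) (hF4 : F4.IsHomogeneous 4)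
    (hG2 : G2.IsHomogeneous 2) (hG3 : G3.IsHomogeneous 3) (hG4 : G4.IsHomogeneous 4)
    (hG5 : G5.IsHomogeneous 5) (hG6 : G6.IsHomogeneous 6)
    (hHsf : Squarefree H) (hHhom : H.IsHomogeneous 2) (hF1t : F1t.IsHomogeneous 1)
    (hα : α ≠ 0)
    (hF4eq : F4 = H ^ 2) (hG6eq : G6 = C α * H ^ 3)
    (hF3eq : F3 = H * F1t)
    (hG5eq : G5 = C ((3 / 2) * α) * H ^ 2 * F1t)
    (hG4eq : G4 = C ((3 / 8) * α) * H * F1t ^ 2 + C ((3 / 2) * α) * H * F2 + C b * H ^ 2)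
    (hbr : ∀ i j : Fin 3, (jacMinor (X 0 + F2 + F3 + F4) (X 2 + G2 + G3 + G4 + G5 + G6) i j).totalDegree < 5) :
    G3 = -(C ((1 / 16) * α) * F1t ^ 3) + C b * H * F1t + C ((3 / 2) * α) * H * X 0
      + C ((3 / 4) * α) * F1t * F2 := by
  have hX0 : (X (0 : Fin 3) : Stmt6Aux.R3).IsHomogeneous 1 := isHomogeneous_X _ _
  have hX2 : (X (2 : Fin 3) : Stmt6Aux.R3).IsHomogeneous 1 := isHomogeneous_X _ _
  have hHne : H ≠ 0 := fun h => not_squarefree_zero (h ▸ hHsf)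
  have jac_hom : ∀ {f g : Stmt6Aux.R3} {a b : ℕ}, f.IsHomogeneous a → g.IsHomogeneous b →
      ∀ i j : Fin 3, (jacMinor f g i j).IsHomogeneous (a - 1 + (b - 1)) := by
    intro f g a b hf hg i j
    exact ((Stmt6Aux.pderiv_isHomogeneous hf i).mul (Stmt6Aux.pderiv_isHomogeneous hg j)).sub
      ((Stmt6Aux.pderiv_isHomogeneous hf j).mul (Stmt6Aux.pderiv_isHomogeneous hg i))
  have hc5z : ∀ {p : Stmt6Aux.R3} {n : ℕ}, p.IsHomogeneous n → n ≠ 5 →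
      homogeneousComponent 5 p = 0 := by
    intro p n hp hn
    rw [homogeneousComponent_of_mem hp, if_neg (fun h => hn h.symm)]
  have hc5s : ∀ {p : Stmt6Aux.R3}, p.IsHomogeneous 5 → homogeneousComponent 5 p = p := by
    intro p hp
    rw [homogeneousComponent_of_mem hp, if_pos rfl]
  have key : ∀ i j : Fin 3,
      jacMinor F4 G3 i j + jacMinor F3 G4 i j + jacMinor F2 G5 i j
        + jacMinor (X 0) G6 i j = 0 := by
    intro i j
    have h0 : homogeneousComponent 5
        (jacMinor (X 0 + F2 + F3 + F4) (X 2 + G2 + G3 + G4 + G5 + G6) i j) = 0 :=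
      homogeneousComponent_eq_zero 5 _ (hbr i j)
    have hsplit : jacMinor (X 0 + F2 + F3 + F4) (X 2 + G2 + G3 + G4 + G5 + G6) i j
        = (jacMinor F4 G3 i j + jacMinor F3 G4 i j + jacMinor F2 G5 i j
            + jacMinor (X 0) G6 i j)
          + (jacMinor (X 0) (X 2) i j
            + jacMinor (X 0) G2 i j
            + jacMinor (X 0) G3 i j
            + jacMinor (X 0) G4 i j
            + jacMinor (X 0) G5 i j
            + jacMinor F2 (X 2) i j
            + jacMinor F2 G2 i j
            + jacMinor F2 G3 i j
            + jacMinor F2 G4 i j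
            + jacMinor F2 G6 i j
            + jacMinor F3 (X 2) i j
            + jacMinor F3 G2 i j
            + jacMinor F3 G3 i j
            + jacMinor F3 G5 i j
            + jacMinor F3 G6 i j
            + jacMinor F4 (X 2) i j
            + jacMinor F4 G2 i j
            + jacMinor F4 G4 i j
            + jacMinor F4 G5 i j
            + jacMinor F4 G6 i j) := by
      simp only [jacMinor, map_add]
      ring
    rw [hsplit, map_add] at h0
    have hmain : homogeneousComponent 5
        (jacMinor F4 G3 i j + jacMinor F3 G4 i j + jacMinor F2 G5 i j
          + jacMinor (X 0) G6 i j)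
        = jacMinor F4 G3 i j + jacMinor F3 G4 i j + jacMinor F2 G5 i j
          + jacMinor (X 0) G6 i j := by
      apply hc5s
      have h1 := jac_hom hF4 hG3 i j
      have h2 := jac_hom hF3 hG4 i j
      have h3 := jac_hom hF2 hG5 i j
      have h4 := jac_hom hX0 hG6 i j
      norm_num at h1 h2 h3 h4
      exact ((h1.add h2).add h3).add h4
    have hrest : homogeneousComponent 5
        (jacMinor (X 0) (X 2) i j
            + jacMinor (X 0) G2 i j
            + jacMinor (X 0) G3 i j
            + jacMinor (X 0) G4 i j
            + jacMinor (X 0) G5 i j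
            + jacMinor F2 (X 2) i j
            + jacMinor F2 G2 i j
            + jacMinor F2 G3 i j
            + jacMinor F2 G4 i j
            + jacMinor F2 G6 i j
            + jacMinor F3 (X 2) i j
            + jacMinor F3 G2 i j
            + jacMinor F3 G3 i j
            + jacMinor F3 G5 i j
            + jacMinor F3 G6 i j
            + jacMinor F4 (X 2) i j
            + jacMinor F4 G2 i j
            + jacMinor F4 G4 i j
            + jacMinor F4 G5 i j
            + jacMinor F4 G6 i j) = 0 := by
      simp only [map_add]
      rw [hc5z (jac_hom hX0 hX2 i j) (by norm_num),
        hc5z (jac_hom hX0 hG2 i j) (by norm_num),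
        hc5z (jac_hom hX0 hG3 i j) (by norm_num),
        hc5z (jac_hom hX0 hG4 i j) (by norm_num),
        hc5z (jac_hom hX0 hG5 i j) (by norm_num),
        hc5z (jac_hom hF2 hX2 i j) (by norm_num),
        hc5z (jac_hom hF2 hG2 i j) (by norm_num),
        hc5z (jac_hom hF2 hG3 i j) (by norm_num),
        hc5z (jac_hom hF2 hG4 i j) (by norm_num),
        hc5z (jac_hom hF2 hG6 i j) (by norm_num),
        hc5z (jac_hom hF3 hX2 i j) (by norm_num),
        hc5z (jac_hom hF3 hG2 i j) (by norm_num),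
        hc5z (jac_hom hF3 hG3 i j) (by norm_num),
        hc5z (jac_hom hF3 hG5 i j) (by norm_num),
        hc5z (jac_hom hF3 hG6 i j) (by norm_num),
        hc5z (jac_hom hF4 hX2 i j) (by norm_num),
        hc5z (jac_hom hF4 hG2 i j) (by norm_num),
        hc5z (jac_hom hF4 hG4 i j) (by norm_num),
        hc5z (jac_hom hF4 hG5 i j) (by norm_num),
        hc5z (jac_hom hF4 hG6 i j) (by norm_num)]
      simp
    rw [hmain, hrest, add_zero] at h0
    exact h0
  obtain ⟨γ, rfl⟩ : ∃ γ : ℂ, α = 16 * γ := ⟨α / 16, by ring⟩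
  subst hF4eq hG6eq hF3eq hG5eq hG4eq
  rw [show G3 = G3 - (-(C ((1 / 16) * (16 * γ)) * F1t ^ 3) + C b * H * F1t
        + C ((3 / 2) * (16 * γ)) * H * X 0 + C ((3 / 4) * (16 * γ)) * F1t * F2)
        + (-(C ((1 / 16) * (16 * γ)) * F1t ^ 3) + C b * H * F1t
        + C ((3 / 2) * (16 * γ)) * H * X 0 + C ((3 / 4) * (16 * γ)) * F1t * F2) by ring]
  set Dd : Stmt6Aux.R3 := G3 - (-(C ((1 / 16) * (16 * γ)) * F1t ^ 3) + C b * H * F1t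
      + C ((3 / 2) * (16 * γ)) * H * X 0 + C ((3 / 4) * (16 * γ)) * F1t * F2) with hDd
  suffices hDz : Dd = 0 by rw [hDz]; ring
  have hDdhom : Dd.IsHomogeneous 3 := by
    rw [hDd]
    apply hG3.sub
    have t1 : ((C ((1 / 16) * (16 * γ)) : Stmt6Aux.R3) * F1t ^ 3).IsHomogeneous 3 := by
      have := (hF1t.pow 3).C_mul ((1 / 16) * (16 * γ))
      simpa using this
    have t2 : ((C b : Stmt6Aux.R3) * H * F1t).IsHomogeneous 3 := by
      have := (hHhom.C_mul b).mul hF1t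
      simpa using this
    have t3 : ((C ((3 / 2) * (16 * γ)) : Stmt6Aux.R3) * H * X 0).IsHomogeneous 3 := by
      have := (hHhom.C_mul ((3 / 2) * (16 * γ))).mul (isHomogeneous_X ℂ (0 : Fin 3))
      simpa using this
    have t4 : ((C ((3 / 4) * (16 * γ)) : Stmt6Aux.R3) * F1t * F2).IsHomogeneous 3 := by
      have := (hF1t.C_mul ((3 / 4) * (16 * γ))).mul hF2
      simpa using this
    exact ((t1.neg.add t2).add t3).add t4
  have hjz : ∀ i j : Fin 3, jacMinor H Dd i j = 0 := by
    intro i j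
    have hk := key i j
    have hid : jacMinor (H ^ 2) G3 i j
        + jacMinor (H * F1t) (C ((3 / 8) * (16 * γ)) * H * F1t ^ 2
            + C ((3 / 2) * (16 * γ)) * H * F2 + C b * H ^ 2) i j
        + jacMinor F2 (C ((3 / 2) * (16 * γ)) * H ^ 2 * F1t) i j
        + jacMinor (X 0) (C (16 * γ) * H ^ 3) i j
        = C (2 : ℂ) * (H * jacMinor H Dd i j) := by
      rw [hDd]
      have c1 : (3 / 2 : ℂ) * (16 * γ) = 24 * γ := by ring
      have c2 : (3 / 8 : ℂ) * (16 * γ) = 6 * γ := by ring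
      have c3 : (1 / 16 : ℂ) * (16 * γ) = γ := by ring
      have c4 : (3 / 4 : ℂ) * (16 * γ) = 12 * γ := by ring
      simp only [c1, c2, c3, c4, jacMinor, map_add, map_sub, map_neg, pderiv_mul,
        pderiv_pow, pderiv_C, mul_zero, zero_mul, add_zero, zero_add, Nat.cast_ofNat]
      simp only [map_mul, map_ofNat]
      ring
    have h0 : C (2 : ℂ) * (H * jacMinor H Dd i j) = 0 := by rw [← hid]; exact hk
    rcases mul_eq_zero.mp h0 with h | h
    · exact absurd h (by simp)
    rcases mul_eq_zero.mp h with h' | h'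
    · exact absurd h' hHne
    exact h'
  have hjac : ∀ i j : Fin 3, pderiv i H * pderiv j Dd = pderiv j H * pderiv i Dd := by
    intro i j
    have := hjz i j
    unfold jacMinor at this
    exact sub_eq_zero.mp this
  exact Stmt6Aux.final hHsf hHhom hDdhom hjac
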